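/- Let p be a prime, let A ≥ 2, N ≥ 1, M, a₁, a₂, k be integers with p > N, 1 ≤ a₁, a₂ ≤ A, and a₁ ≠ a₂. Then the number of pairs of integers (n₁, n₂) with M < n₁, n₂ ≤ M + N and a₁·n₂ − a₂·n₁ = k·p is at most N·gcd(a₁,a₂)/max(a₁,a₂) + 1. -/

import Mathlib

open Finset

/-- If all elements of a finite set of integers inside an interval of length `N`
are pairwise congruent modulo `d`, then there are at most `N/d + 1` of them. -/
lemma interval_card_le (d M N : ℤ) (hd : 1 ≤ d) (hN : 1 ≤ N)
    (S : Finset ℤ) (hS : S ⊆ Finset.Icc (M + 1) (M + N))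
    (hdvd : ∀ x ∈ S, ∀ y ∈ S, d ∣ (x - y)) :
    (S.card : ℝ) ≤ (N : ℝ) / (d : ℝ) + 1 := by
  rcases S.eq_empty_or_nonempty with h | h
  · simp [h]
    positivity
  · set x₀ := S.min' h with hx₀
    have hx₀S : x₀ ∈ S := S.min'_mem h
    have hd0 : (0 : ℤ) < d := hd
    -- map to quotients
    have hinj : Set.InjOn (fun x => (x - x₀) / d) S := by
      intro x hx y hy hxy
      have h1 : d ∣ x - x₀ := hdvd x hx x₀ hx₀S
      have h2 : d ∣ y - x₀ := hdvd y hy x₀ hx₀S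
      have e1 : (x - x₀) / d * d = x - x₀ := Int.ediv_mul_cancel h1
      have e2 : (y - x₀) / d * d = y - x₀ := Int.ediv_mul_cancel h2
      simp only at hxy
      have : x - x₀ = y - x₀ := by rw [← e1, ← e2, hxy]
      omega
    have hcard : S.card = (S.image (fun x => (x - x₀) / d)).card :=
      (Finset.card_image_of_injOn hinj).symm
    have hsub : S.image (fun x => (x - x₀) / d) ⊆ Finset.Icc 0 ((N - 1) / d) := by
      intro t ht
      simp only [Finset.mem_image] at ht
      obtain ⟨x, hx, rfl⟩ := ht
      have hxI := hS hx
      have hx₀I := hS hx₀S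
      simp only [Finset.mem_Icc] at hxI hx₀I ⊢
      have hle : x₀ ≤ x := S.min'_le x hx
      constructor
      · exact Int.ediv_nonneg (by omega) (le_of_lt hd0)
      · exact Int.ediv_le_ediv hd0 (by omega)
    have hcard2 : S.card ≤ (N - 1) / d + 1 := by
      calc (S.card : ℤ) = ((S.image (fun x => (x - x₀) / d)).card : ℤ) := by
            exact_mod_cast hcard
        _ ≤ ((Finset.Icc 0 ((N - 1) / d)).card : ℤ) := by
            exact_mod_cast Finset.card_le_card hsub
        _ = (N - 1) / d + 1 := by
            rw [Int.card_Icc]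
            have h1 : (0 : ℤ) ≤ (N - 1) / d := Int.ediv_nonneg (by omega) (le_of_lt hd0)
            rw [Int.toNat_of_nonneg (by omega)]
            ring
    have hq : ((N - 1) / d : ℤ) * d ≤ N - 1 := Int.ediv_mul_le _ (by omega)
    have hqq : (((N - 1) / d : ℤ) : ℝ) ≤ (N : ℝ) / (d : ℝ) := by
      rw [le_div_iff₀ (by exact_mod_cast hd0)]
      have : (((N - 1) / d : ℤ) * d : ℝ) ≤ ((N - 1 : ℤ) : ℝ) := by exact_mod_cast hq
      push_cast at this ⊢
      linarith
    have : (S.card : ℝ) ≤ (((N - 1) / d : ℤ) : ℝ) + 1 := by exact_mod_cast hcard2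
    linarith

/-- The main counting bound with the first coefficient distinguished. -/
lemma card_sol_le (M N : ℤ) (hN : 1 ≤ N) (a b c : ℤ) (ha : 1 ≤ a) (hb : 1 ≤ b) :
    ((((Finset.Icc (M + 1) (M + N)) ×ˢ (Finset.Icc (M + 1) (M + N))).filter
        (fun q : ℤ × ℤ => a * q.2 - b * q.1 = c)).card : ℝ) ≤
      (N : ℝ) * (Int.gcd a b : ℝ) / (a : ℝ) + 1 := by
  set S := (((Finset.Icc (M + 1) (M + N)) ×ˢ (Finset.Icc (M + 1) (M + N))).filter
        (fun q : ℤ × ℤ => a * q.2 - b * q.1 = c)) with hSdef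
  set g : ℤ := (Int.gcd a b : ℤ) with hg
  have hg0 : 0 < g := by
    have := Int.gcd_pos_of_ne_zero_left b (show a ≠ 0 by omega)
    rw [hg]
    exact_mod_cast this
  have hga : g ∣ a := Int.gcd_dvd_left a b
  have hgb : g ∣ b := Int.gcd_dvd_right a b
  set d : ℤ := a / g with hd
  have hdg : d * g = a := Int.ediv_mul_cancel hga
  have hd1 : 1 ≤ d := by nlinarith
  -- project to first coordinate
  have hinj : Set.InjOn Prod.fst (S : Set (ℤ × ℤ)) := by
    intro q hq q' hq' hqq
    simp only [hSdef, Finset.mem_coe, Finset.mem_filter] at hq hq'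
    have h1 := hq.2
    have h2 := hq'.2
    have ha0 : a ≠ 0 := by omega
    have : a * q.2 = a * q'.2 := by linear_combination h1 - h2 + b * hqq
    have h22 : q.2 = q'.2 := by
      exact mul_left_cancel₀ ha0 this
    exact Prod.ext hqq h22
  set T := S.image Prod.fst with hT
  have hcard : S.card = T.card := (Finset.card_image_of_injOn hinj).symm
  have hTsub : T ⊆ Finset.Icc (M + 1) (M + N) := by
    intro x hx
    simp only [hT, Finset.mem_image] at hx
    obtain ⟨q, hq, rfl⟩ := hx
    simp only [hSdef, Finset.mem_filter, Finset.mem_product] at hq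
    exact hq.1.1
  have hdvd : ∀ x ∈ T, ∀ y ∈ T, d ∣ (x - y) := by
    intro x hx y hy
    simp only [hT, Finset.mem_image] at hx hy
    obtain ⟨q, hq, rfl⟩ := hx
    obtain ⟨q', hq', rfl⟩ := hy
    simp only [hSdef, Finset.mem_filter] at hq hq'
    have h1 := hq.2
    have h2 := hq'.2
    -- a * (q.2 - q'.2) = b * (q.1 - q'.1)
    have heq : a * (q.2 - q'.2) = b * (q.1 - q'.1) := by linear_combination h1 - h2
    set b' : ℤ := b / g with hb'
    have hbg : b' * g = b := Int.ediv_mul_cancel hgb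
    have hcop : IsCoprime d b' := by
      have hgnat : 0 < Int.gcd a b := Int.gcd_pos_of_ne_zero_left b (show a ≠ 0 by omega)
      have h := Int.gcd_div_gcd_div_gcd (i := a) (j := b) hgnat
      rw [Int.isCoprime_iff_gcd_eq_one]
      exact h
    have hdvd' : d ∣ b' * (q.1 - q'.1) := by
      have hcancel : d * (q.2 - q'.2) * g = b' * (q.1 - q'.1) * g := by
        linear_combination heq + (q.2 - q'.2) * hdg - (q.1 - q'.1) * hbg
      have hc := mul_right_cancel₀ (show g ≠ 0 by omega) hcancel
      exact ⟨q.2 - q'.2, hc.symm⟩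
    exact hcop.dvd_of_dvd_mul_left hdvd'
  have hbound := interval_card_le d M N hd1 hN T hTsub hdvd
  have hdR : (d : ℝ) ≠ 0 := by exact_mod_cast (by omega : d ≠ 0)
  have hgR : (g : ℝ) ≠ 0 := by exact_mod_cast (by omega : g ≠ 0)
  have haR : (a : ℝ) ≠ 0 := by exact_mod_cast (show a ≠ 0 by omega)
  have hdiv : (N : ℝ) / (d : ℝ) = (N : ℝ) * (g : ℝ) / (a : ℝ) := by
    have : (d : ℝ) * (g : ℝ) = (a : ℝ) := by exact_mod_cast hdg
    field_simp
    linear_combination (-1 : ℝ) * this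
  have hcast : ((Int.gcd a b : ℕ) : ℝ) = ((g : ℤ) : ℝ) := by rw [hg]; push_cast; ring
  rw [hcard, hcast, ← hdiv]
  exact hbound

theorem counting_pairs_bound (p : ℕ) (hp : p.Prime) (A N : ℤ) (M a₁ a₂ k : ℤ)
    (hA : 2 ≤ A) (hN : 1 ≤ N) (hNp : N < (p : ℤ))
    (ha₁ : 1 ≤ a₁) (ha₁A : a₁ ≤ A) (ha₂ : 1 ≤ a₂) (ha₂A : a₂ ≤ A) (hne : a₁ ≠ a₂) :
    (((Finset.Icc (M + 1) (M + N) ×ˢ Finset.Icc (M + 1) (M + N)).filter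
        (fun q : ℤ × ℤ => a₁ * q.2 - a₂ * q.1 = k * (p : ℤ))).card : ℝ) ≤
      (N : ℝ) * (Int.gcd a₁ a₂ : ℝ) / (max a₁ a₂ : ℤ) + 1 := by
  rcases le_or_gt a₂ a₁ with hle | hlt
  · rw [max_eq_left hle]
    exact card_sol_le M N hN a₁ a₂ (k * p) ha₁ ha₂
  · rw [max_eq_right (le_of_lt hlt)]
    have hswap : ((Finset.Icc (M + 1) (M + N) ×ˢ Finset.Icc (M + 1) (M + N)).filter
        (fun q : ℤ × ℤ => a₁ * q.2 - a₂ * q.1 = k * (p : ℤ))).card =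
        ((Finset.Icc (M + 1) (M + N) ×ˢ Finset.Icc (M + 1) (M + N)).filter
        (fun q : ℤ × ℤ => a₂ * q.2 - a₁ * q.1 = -(k * (p : ℤ)))).card := by
      apply Finset.card_bij' (fun q _ => Prod.swap q) (fun q _ => Prod.swap q)
      · intro q hq
        simp only [Finset.mem_filter, Finset.mem_product] at hq ⊢
        refine ⟨⟨hq.1.2, hq.1.1⟩, by simp; omega⟩
      · intro q hq
        simp only [Finset.mem_filter, Finset.mem_product] at hq ⊢
        refine ⟨⟨hq.1.2, hq.1.1⟩, by simp; omega⟩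
      · intro q _; exact Prod.swap_swap q
      · intro q _; exact Prod.swap_swap q
    rw [hswap, Int.gcd_comm]
    exact card_sol_le M N hN a₂ a₁ (-(k * p)) ha₂ ha₁
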